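/- arXiv:1212.6410 — 2 statements merged into one kernel-verified Lean document; each statement's English description precedes it below -/
import Mathlib

section
/- For u(η,θ) = (a²/(8ν))(cosh 2b − cos 2θ)(cosh 2b − cosh 2η) sech(2b) and J(η,θ) = a²(sinh²η + sin²θ), the double integral ∫₀^b ∫₀^{2π} u(η,θ) J(η,θ) dθ dη equals (π a⁴/(32ν)) sinh²(2b) tanh(2b). -/
open Real MeasureTheory intervalIntegral

/-- Flux of the stationary elliptical Poiseuille flow with unit pressure gradient. -/
theorem stmt_8 (a ν b : ℝ) (ha : 0 < a) (hν : 0 < ν) (hb : 0 < b) :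
    (∫ η in (0 : ℝ)..b, ∫ θ in (0 : ℝ)..(2 * π),
      (a ^ 2 / (8 * ν) * (Real.cosh (2 * b) - Real.cos (2 * θ)) *
        (Real.cosh (2 * b) - Real.cosh (2 * η)) / Real.cosh (2 * b)) *
      (a ^ 2 * (Real.sinh η ^ 2 + Real.sin θ ^ 2))) =
    π * a ^ 4 / (32 * ν) * Real.sinh (2 * b) ^ 2 * Real.tanh (2 * b) := by
  have hc : (0:ℝ) < Real.cosh (2*b) := Real.cosh_pos _
  set c := Real.cosh (2*b) with hcdef
  have hcne : c ≠ 0 := ne_of_gt hc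
  have hνne : ν ≠ 0 := ne_of_gt hν
  -- inner integral
  have inner : ∀ η : ℝ, (∫ θ in (0 : ℝ)..(2 * π),
      (a ^ 2 / (8 * ν) * (c - Real.cos (2 * θ)) *
        (c - Real.cosh (2 * η)) / c) *
      (a ^ 2 * (Real.sinh η ^ 2 + Real.sin θ ^ 2)))
      = (a^4/(8*ν*c)) * ((c - Real.cosh (2*η)) * (π * c * Real.cosh (2*η) + π/2)) := by
    intro η
    set s2 := Real.sinh η ^ 2 with hs2
    have key : (∫ θ in (0:ℝ)..(2*π), (c - Real.cos (2*θ)) * (s2 + Real.sin θ ^2))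
        = π * c * Real.cosh (2*η) + π/2 := by
      have hderiv : ∀ θ ∈ Set.uIcc (0:ℝ) (2*π), HasDerivAt
          (fun θ => (c*s2 + c/2 + 1/4)*θ - (c/2 + s2 + 1/2)*(Real.sin (2*θ)/2)
            + Real.sin (4*θ)/16)
          ((c - Real.cos (2*θ)) * (s2 + Real.sin θ ^2)) θ := by
        intro θ _
        have h2 : HasDerivAt (fun θ:ℝ => Real.sin (2*θ)) (Real.cos (2*θ)*2) θ := by
          simpa [Function.comp_def] using (Real.hasDerivAt_sin (2*θ)).comp θ ((hasDerivAt_id θ).const_mul 2)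
        have h4 : HasDerivAt (fun θ:ℝ => Real.sin (4*θ)) (Real.cos (4*θ)*4) θ := by
          simpa [Function.comp_def] using (Real.hasDerivAt_sin (4*θ)).comp θ ((hasDerivAt_id θ).const_mul 4)
        have h := (((hasDerivAt_id θ).const_mul (c*s2 + c/2 + 1/4)).sub
            ((h2.div_const 2).const_mul (c/2 + s2 + 1/2))).add (h4.div_const 16)
        convert h using 1
        case e'_4 => rfl
        case e'_5 => rfl
        case e'_8 => rfl
        have e1 : Real.sin θ ^ 2 = (1 - Real.cos (2*θ))/2 := by
          have h := Real.sin_sq_add_cos_sq θ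
          rw [Real.cos_two_mul]; nlinarith
        have e2 : Real.cos (4*θ) = 2*Real.cos (2*θ)^2 - 1 := by
          rw [show (4:ℝ)*θ = 2*(2*θ) by ring, Real.cos_two_mul]
        rw [e1, e2]; ring
      have hcont : Continuous fun θ:ℝ => (c - Real.cos (2*θ)) * (s2 + Real.sin θ ^2) := by
        fun_prop
      rw [intervalIntegral.integral_eq_sub_of_hasDerivAt hderiv
        (hcont.intervalIntegrable _ _)]
      have s4 : Real.sin (4*π) = 0 := by
        simpa using Real.sin_int_mul_pi 4
      have s8 : Real.sin (8*π) = 0 := by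
        simpa using Real.sin_int_mul_pi 8
      rw [show (2:ℝ)*(2*π) = 4*π by ring, show (4:ℝ)*(2*π) = 8*π by ring, s4, s8,
        Real.cosh_two_mul, Real.cosh_sq, hs2]
      simp only [mul_zero, Real.sin_zero]
      ring
    have rearr : ∀ θ ∈ Set.uIcc (0:ℝ) (2*π), (a ^ 2 / (8 * ν) * (c - Real.cos (2 * θ)) *
        (c - Real.cosh (2 * η)) / c) * (a ^ 2 * (s2 + Real.sin θ ^ 2))
        = (a^4/(8*ν*c) * (c - Real.cosh (2*η))) *
          ((c - Real.cos (2*θ)) * (s2 + Real.sin θ ^2)) := by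
      intro θ _; field_simp
    rw [intervalIntegral.integral_congr rearr, intervalIntegral.integral_const_mul, key]
    ring
  simp_rw [inner]
  -- outer integral
  have hderiv2 : ∀ η ∈ Set.uIcc (0:ℝ) b, HasDerivAt
      (fun η => π*(c^2 - 1/2)*(Real.sinh (2*η)/2) - π*c/2*(Real.sinh (4*η)/4))
      ((c - Real.cosh (2*η)) * (π * c * Real.cosh (2*η) + π/2)) η := by
    intro η _
    have h2 : HasDerivAt (fun η:ℝ => Real.sinh (2*η)) (Real.cosh (2*η)*2) η := by
      simpa [Function.comp_def] using (Real.hasDerivAt_sinh (2*η)).comp η ((hasDerivAt_id η).const_mul 2)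
    have h4 : HasDerivAt (fun η:ℝ => Real.sinh (4*η)) (Real.cosh (4*η)*4) η := by
      simpa [Function.comp_def] using (Real.hasDerivAt_sinh (4*η)).comp η ((hasDerivAt_id η).const_mul 4)
    have h := ((h2.div_const 2).const_mul (π*(c^2 - 1/2))).sub
        ((h4.div_const 4).const_mul (π*c/2))
    convert h using 1
    case e'_4 => rfl
    case e'_5 => rfl
    case e'_8 => rfl
    have e2 : Real.cosh (4*η) = 2*Real.cosh (2*η)^2 - 1 := by
      rw [show (4:ℝ)*η = 2*(2*η) by ring, Real.cosh_two_mul, Real.cosh_sq]; ring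
    rw [e2]; ring
  have hcont2 : Continuous fun η:ℝ =>
      (c - Real.cosh (2*η)) * (π * c * Real.cosh (2*η) + π/2) := by fun_prop
  rw [intervalIntegral.integral_const_mul,
    intervalIntegral.integral_eq_sub_of_hasDerivAt hderiv2 (hcont2.intervalIntegrable _ _)]
  have e4 : Real.sinh (4*b) = 2 * Real.sinh (2*b) * c := by
    rw [show (4:ℝ)*b = 2*(2*b) by ring, Real.sinh_two_mul, hcdef]
  have hc2 : c^2 = Real.sinh (2*b)^2 + 1 := by rw [hcdef, Real.cosh_sq]
  rw [show (2:ℝ)*b = 2*b by ring, show (4:ℝ)*b = 4*b by ring, e4,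
    Real.tanh_eq_sinh_div_cosh, ← hcdef]
  simp only [mul_zero, Real.sinh_zero, zero_div, sub_zero]
  field_simp
  linear_combination 128 * hc2
end

section
/- Let b > 0, ν > 0, a > 0. The stationary modes û₀(η) = −(a²/(8ν))(cosh 2η − cosh 2b) and û₂(η) = −(a²/(16ν))(1 + e^{4b} − e^{2b−2η} − e^{2b+2η})/(1 + e^{4b}) satisfy ∫₀^b (cosh(2η) û₀(η) − û₂(η)) dη = (a²/(32ν)) sinh²(2b) tanh(2b), so the bracketed quantity in the flux–pressure relation is strictly positive. -/
open Real intervalIntegral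

/-- The bracketed quantity in the stationary (`m = 0`) flux–pressure relation
equals `(a²/(32ν)) sinh²(2b) tanh(2b)`, hence is strictly positive. -/
theorem stmt_19 (a ν b : ℝ) (ha : 0 < a) (hν : 0 < ν) (hb : 0 < b)
    (u₀ u₂ : ℝ → ℝ)
    (hu₀ : ∀ η : ℝ, u₀ η = -(a ^ 2 / (8 * ν)) * (Real.cosh (2 * η) - Real.cosh (2 * b)))
    (hu₂ : ∀ η : ℝ, u₂ η = -(a ^ 2 / (16 * ν)) *
      (1 + Real.exp (4 * b) - Real.exp (2 * b - 2 * η) - Real.exp (2 * b + 2 * η)) /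
        (1 + Real.exp (4 * b))) :
    (∫ η in (0 : ℝ)..b, (Real.cosh (2 * η) * u₀ η - u₂ η)) =
      a ^ 2 / (32 * ν) * Real.sinh (2 * b) ^ 2 * Real.tanh (2 * b) ∧
    0 < ∫ η in (0 : ℝ)..b, (Real.cosh (2 * η) * u₀ η - u₂ η) := by
  have hE4 : (0:ℝ) < 1 + Real.exp (4 * b) := by positivity
  set F : ℝ → ℝ := fun η =>
    -(a ^ 2 / (8 * ν)) * (η / 2 + Real.sinh (4 * η) / 8
        - Real.cosh (2 * b) * Real.sinh (2 * η) / 2)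
      + (a ^ 2 / (16 * ν)) *
        ((1 + Real.exp (4 * b)) * η + Real.exp (2 * b - 2 * η) / 2
          - Real.exp (2 * b + 2 * η) / 2) / (1 + Real.exp (4 * b)) with hF
  have hderiv : ∀ η : ℝ, HasDerivAt F (Real.cosh (2 * η) * u₀ η - u₂ η) η := by
    intro η
    have h2 : HasDerivAt (fun x : ℝ => Real.sinh (2 * x)) (2 * Real.cosh (2 * η)) η := by
      simpa [Function.comp_def, mul_comm] using (Real.hasDerivAt_sinh (2 * η)).comp η
        ((hasDerivAt_id η).const_mul 2)
    have h4 : HasDerivAt (fun x : ℝ => Real.sinh (4 * x)) (4 * Real.cosh (4 * η)) η := by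
      simpa [Function.comp_def, mul_comm] using (Real.hasDerivAt_sinh (4 * η)).comp η
        ((hasDerivAt_id η).const_mul 4)
    have he1 : HasDerivAt (fun x : ℝ => Real.exp (2 * b - 2 * x))
        (-2 * Real.exp (2 * b - 2 * η)) η := by
      have hl : HasDerivAt (fun x : ℝ => 2 * b - 2 * x) (-2 : ℝ) η := by
        simpa using ((hasDerivAt_id η).const_mul 2).const_sub (2 * b)
      simpa [Function.comp_def, mul_comm] using (Real.hasDerivAt_exp (2 * b - 2 * η)).comp η hl
    have he2 : HasDerivAt (fun x : ℝ => Real.exp (2 * b + 2 * x))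
        (2 * Real.exp (2 * b + 2 * η)) η := by
      have hl : HasDerivAt (fun x : ℝ => 2 * b + 2 * x) (2 : ℝ) η := by
        simpa using ((hasDerivAt_id η).const_mul 2).const_add (2 * b)
      simpa [Function.comp_def, mul_comm] using (Real.hasDerivAt_exp (2 * b + 2 * η)).comp η hl
    have hlin : HasDerivAt (fun x : ℝ => (1 + Real.exp (4 * b)) * x)
        (1 + Real.exp (4 * b)) η := by
      simpa using (hasDerivAt_id η).const_mul (1 + Real.exp (4 * b))
    have hA : HasDerivAt
        (fun x : ℝ => x / 2 + Real.sinh (4 * x) / 8 - Real.cosh (2 * b) * Real.sinh (2 * x) / 2)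
        (1 / 2 + 4 * Real.cosh (4 * η) / 8
          - Real.cosh (2 * b) * (2 * Real.cosh (2 * η)) / 2) η := by
      have hid : HasDerivAt (fun x : ℝ => x / 2) (1 / 2 : ℝ) η := by
        simpa using (hasDerivAt_id η).div_const 2
      exact (hid.add (h4.div_const 8)).sub
        (((h2.const_mul (Real.cosh (2 * b)))).div_const 2)
    have hB : HasDerivAt
        (fun x : ℝ => (1 + Real.exp (4 * b)) * x + Real.exp (2 * b - 2 * x) / 2
          - Real.exp (2 * b + 2 * x) / 2)
        ((1 + Real.exp (4 * b)) + (-2 * Real.exp (2 * b - 2 * η)) / 2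
          - 2 * Real.exp (2 * b + 2 * η) / 2) η :=
      (hlin.add (he1.div_const 2)).sub (he2.div_const 2)
    have hFd := ((hA.const_mul (-(a ^ 2 / (8 * ν))))).add
      ((hB.const_mul (a ^ 2 / (16 * ν))).div_const (1 + Real.exp (4 * b)))
    refine hFd.congr_deriv ?_
    rw [hu₀, hu₂]
    have hc4 : Real.cosh (4 * η) = 2 * Real.cosh (2 * η) ^ 2 - 1 := by
      rw [show (4:ℝ) * η = 2 * (2 * η) by ring, Real.cosh_two_mul]
      rw [Real.sinh_sq]; ring
    rw [hc4]
    field_simp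
    ring
  have hcont : ∀ η ∈ Set.uIcc (0:ℝ) b,
      ContinuousAt (fun η => Real.cosh (2 * η) * u₀ η - u₂ η) η := by
    intro η _
    have : Continuous (fun η : ℝ => Real.cosh (2 * η) * u₀ η - u₂ η) := by
      have h0 : Continuous u₀ := by
        have : u₀ = fun η => -(a ^ 2 / (8 * ν)) * (Real.cosh (2 * η) - Real.cosh (2 * b)) :=
          funext hu₀
        rw [this]; fun_prop
      have h2c : Continuous u₂ := by
        have : u₂ = fun η => -(a ^ 2 / (16 * ν)) *
            (1 + Real.exp (4 * b) - Real.exp (2 * b - 2 * η) - Real.exp (2 * b + 2 * η)) /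
              (1 + Real.exp (4 * b)) := funext hu₂
        rw [this]
        fun_prop
      exact ((Real.continuous_cosh.comp (continuous_const.mul continuous_id)).mul h0).sub h2c
    exact this.continuousAt
  have hInt : (∫ η in (0:ℝ)..b, (Real.cosh (2 * η) * u₀ η - u₂ η)) = F b - F 0 := by
    refine intervalIntegral.integral_eq_sub_of_hasDerivAt (fun η _ => hderiv η) ?_
    exact (ContinuousOn.intervalIntegrable (fun η hη => (hcont η hη).continuousWithinAt))
  have hval : F b - F 0 = a ^ 2 / (32 * ν) * Real.sinh (2 * b) ^ 2 * Real.tanh (2 * b) := by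
    have hcosh : Real.cosh (2 * b) ≠ 0 := (Real.cosh_pos (2*b)).ne'
    rw [hF]
    simp only
    rw [Real.tanh_eq_sinh_div_cosh]
    rw [show (4:ℝ) * b = 2 * b + 2 * b by ring, Real.sinh_add, Real.exp_add]
    simp only [mul_zero, sub_zero, add_zero, zero_div, Real.sinh_zero, sub_self, Real.exp_zero]
    rw [Real.sinh_eq, Real.cosh_eq, Real.exp_neg]
    have hEb : Real.exp (2 * b) ≠ 0 := (Real.exp_pos _).ne'
    have hE4' : 1 + Real.exp (2 * b) * Real.exp (2 * b) ≠ 0 := by positivity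
    field_simp
    ring
  have heq : (∫ η in (0:ℝ)..b, (Real.cosh (2 * η) * u₀ η - u₂ η)) =
      a ^ 2 / (32 * ν) * Real.sinh (2 * b) ^ 2 * Real.tanh (2 * b) := hInt.trans hval
  refine ⟨heq, ?_⟩
  rw [heq]
  have h1 : 0 < Real.sinh (2 * b) := Real.sinh_pos_iff.mpr (by linarith)
  have h2 : 0 < Real.tanh (2 * b) := by
    rw [Real.tanh_eq_sinh_div_cosh]
    exact div_pos h1 (Real.cosh_pos _)
  positivity
end
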